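/- Let p ∈ (1,2) and 0 < a₁ < a₂. For i = 1,2, let ψᵢ : [0,1) → [0,∞) be a continuously differentiable function with ψᵢ(0) = 0 satisfying ψᵢ'(y) + (p/(p-1)) ψᵢ(y)^{(p-1)/p} = (p aᵢ^{2-p}/(p-1))(1-y) for all y ∈ (0,1). Then there exists a constant K(p) > 0 depending only on p such that, for all y ∈ [0,1): ψ₁(y) ≤ ψ₂(y) ≤ ψ₁(y) + K(p)(a₂-a₁)^{2-p} and |ψ₁'(y) - ψ₂'(y)| ≤ K(p)[(a₂-a₁)^{(2-p)(p-1)/p} + (a₂-a₁)^{2-p}]. -/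

import Mathlib

open Set Filter Topology

/-- `ψ : [0,1) → [0,∞)` is continuously differentiable (with derivative `ψd`), `ψ(0) = 0`,
and `ψ' + (p/(p-1)) ψ^{(p-1)/p} = (p a^{2-p}/(p-1))(1-y)` holds on `(0,1)`. -/
def PsiSol (p a : ℝ) (ψ ψd : ℝ → ℝ) : Prop :=
  (∀ y ∈ Set.Ico (0:ℝ) 1, HasDerivWithinAt ψ (ψd y) (Set.Ico 0 1) y) ∧
  ContinuousOn ψd (Set.Ico 0 1) ∧
  (∀ y ∈ Set.Ico (0:ℝ) 1, 0 ≤ ψ y) ∧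
  ψ 0 = 0 ∧
  (∀ y ∈ Set.Ioo (0:ℝ) 1,
    ψd y + (p/(p-1)) * ψ y ^ ((p-1)/p) = (p * a ^ (2-p) / (p-1)) * (1-y))

/-- Subadditivity of `rpow` with exponent in `[0,1]`, in subtracted form. -/
lemma sub_rpow_le {s x y : ℝ} (hs0 : 0 ≤ s) (hs1 : s ≤ 1) (hx : 0 ≤ x) (hxy : x ≤ y) :
    y ^ s - x ^ s ≤ (y - x) ^ s := by
  have hy : 0 ≤ y := hx.trans hxy
  have hd : 0 ≤ y - x := sub_nonneg.2 hxy
  have h := NNReal.rpow_add_le_add_rpow x.toNNReal (y - x).toNNReal hs0 hs1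
  have hsum : x.toNNReal + (y - x).toNNReal = y.toNNReal := by
    rw [← Real.toNNReal_add hx hd]
    norm_num
  rw [hsum] at h
  have h' := NNReal.coe_le_coe.2 h
  rw [NNReal.coe_add, NNReal.coe_rpow, NNReal.coe_rpow, NNReal.coe_rpow,
    Real.coe_toNNReal _ hy, Real.coe_toNNReal _ hx, Real.coe_toNNReal _ hd] at h'
  linarith

/-- The ODE extends by continuity to the closed endpoint `0`. -/
lemma PsiSol.eqn_Ico {p a : ℝ} {ψ ψd : ℝ → ℝ} (hp1 : 1 < p) (hp2 : p < 2)
    (h : PsiSol p a ψ ψd) :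
    ∀ y ∈ Set.Ico (0:ℝ) 1,
      ψd y + (p/(p-1)) * ψ y ^ ((p-1)/p) = (p * a ^ (2-p) / (p-1)) * (1-y) := by
  obtain ⟨hder, hcont, hpos, h0, heq⟩ := h
  intro y hy
  rcases eq_or_lt_of_le hy.1 with h0y | h0y
  · subst h0y
    set g : ℝ → ℝ := fun z => ψd z + (p/(p-1)) * ψ z ^ ((p-1)/p) with hg
    have hψc : ContinuousOn ψ (Set.Ico 0 1) := fun z hz => (hder z hz).continuousWithinAt
    have hα : (0:ℝ) < (p-1)/p := div_pos (by linarith) (by linarith)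
    have h01 : (0:ℝ) ∈ Set.Ico (0:ℝ) 1 := ⟨le_refl _, one_pos⟩
    have hgc : ContinuousWithinAt g (Set.Ico 0 1) 0 := by
      apply ContinuousWithinAt.add (hcont 0 h01)
      apply ContinuousWithinAt.mul continuousWithinAt_const
      exact (Real.continuousAt_rpow_const _ _ (Or.inr hα.le)).comp_continuousWithinAt (hψc 0 h01)
    have h1 : Tendsto g (𝓝[Set.Ioo (0:ℝ) 1] 0) (𝓝 (g 0)) :=
      hgc.mono_left (nhdsWithin_mono _ Set.Ioo_subset_Ico_self)
    have h1' : Tendsto (fun z => (p * a ^ (2-p) / (p-1)) * (1-z))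
        (𝓝[Set.Ioo (0:ℝ) 1] 0) (𝓝 (g 0)) := by
      refine h1.congr' ?_
      filter_upwards [self_mem_nhdsWithin] with z hz
      exact heq z hz
    have h2 : Tendsto (fun z => (p * a ^ (2-p) / (p-1)) * (1-z))
        (𝓝[Set.Ioo (0:ℝ) 1] 0) (𝓝 ((p * a ^ (2-p) / (p-1)) * (1-0))) := by
      apply Tendsto.mono_left _ nhdsWithin_le_nhds
      exact Tendsto.const_mul _ (tendsto_const_nhds.sub tendsto_id)
    have hne : (𝓝[Set.Ioo (0:ℝ) 1] (0:ℝ)).NeBot := by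
      rw [nhdsWithin_Ioo_eq_nhdsGT one_pos]
      infer_instance
    have := tendsto_nhds_unique h1' h2
    simpa [hg] using this
  · exact heq y ⟨h0y, hy.2⟩

set_option maxHeartbeats 1000000 in
/-- **Monotonicity and continuous dependence w.r.t. `a`.** There is a
constant `K(p) > 0`, depending only on `p`, such that for all `0 < a₁ < a₂` and all
solutions `ψ₁, ψ₂` of the corresponding initial value problems:
`ψ₁ ≤ ψ₂ ≤ ψ₁ + K(p)(a₂-a₁)^{2-p}` and
`|ψ₁' - ψ₂'| ≤ K(p)[(a₂-a₁)^{(2-p)(p-1)/p} + (a₂-a₁)^{2-p}]` on `[0,1)`. -/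
theorem stmt5 (p : ℝ) (hp : p ∈ Set.Ioo (1:ℝ) 2) :
    ∃ K : ℝ, 0 < K ∧
      ∀ a₁ a₂ : ℝ, 0 < a₁ → a₁ < a₂ →
        ∀ ψ₁ ψd₁ ψ₂ ψd₂ : ℝ → ℝ, PsiSol p a₁ ψ₁ ψd₁ → PsiSol p a₂ ψ₂ ψd₂ →
          ∀ y ∈ Set.Ico (0:ℝ) 1,
            ψ₁ y ≤ ψ₂ y ∧
            ψ₂ y ≤ ψ₁ y + K * (a₂ - a₁) ^ (2-p) ∧
            |ψd₁ y - ψd₂ y| ≤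
              K * ((a₂ - a₁) ^ ((2-p)*(p-1)/p) + (a₂ - a₁) ^ (2-p)) := by
  obtain ⟨hp1, hp2⟩ := hp
  have hp0 : (0:ℝ) < p := by linarith
  have hpm : (0:ℝ) < p - 1 := by linarith
  set α : ℝ := (p-1)/p with hαdef
  have hα0 : 0 < α := div_pos hpm hp0
  have hα1 : α ≤ 1 := by rw [hαdef, div_le_one hp0]; linarith
  set C : ℝ := p/(p-1) with hCdef
  have hC0 : 0 < C := div_pos hp0 hpm
  have hCα0 : 0 < C ^ α := Real.rpow_pos_of_pos hC0 α
  refine ⟨C * (1 + C ^ α), by positivity, ?_⟩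
  intro a₁ a₂ ha₁ ha ψ₁ ψd₁ ψ₂ ψd₂ h₁ h₂
  have hs0 : (0:ℝ) ≤ 2 - p := by linarith
  have hs1 : (2:ℝ) - p ≤ 1 := by linarith
  -- rewritten ODE on all of [0,1)
  have key : ∀ (a : ℝ) (ψ ψd : ℝ → ℝ), PsiSol p a ψ ψd → ∀ y ∈ Set.Ico (0:ℝ) 1,
      ψd y = C * a ^ (2-p) * (1-y) - C * ψ y ^ α := by
    intro a ψ ψd h y hy
    have := h.eqn_Ico hp1 hp2 y hy
    have hco : p * a ^ (2-p) / (p-1) = C * a ^ (2-p) := by rw [hCdef]; ring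
    rw [hco] at this
    linarith
  have key₁ := key a₁ ψ₁ ψd₁ h₁
  have key₂ := key a₂ ψ₂ ψd₂ h₂
  obtain ⟨hder₁, _, hpos₁, h0₁, _⟩ := h₁
  obtain ⟨hder₂, _, hpos₂, h0₂, _⟩ := h₂
  set Δ : ℝ := a₂ ^ (2-p) - a₁ ^ (2-p) with hΔdef
  have hΔ0 : 0 < Δ := sub_pos.2 (Real.rpow_lt_rpow ha₁.le ha (by linarith))
  have hdle : (0:ℝ) ≤ a₂ - a₁ := by linarith
  have hΔle : Δ ≤ (a₂ - a₁) ^ (2-p) := sub_rpow_le hs0 hs1 ha₁.le ha.le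
  set φ : ℝ → ℝ := fun y => ψ₂ y - ψ₁ y with hφdef
  have hφc : ContinuousOn φ (Set.Ico 0 1) := fun z hz =>
    ((hder₂ z hz).continuousWithinAt).sub ((hder₁ z hz).continuousWithinAt)
  have hφ0 : φ 0 = 0 := by simp [hφdef, h0₁, h0₂]
  have hderφ : ∀ y ∈ Set.Ioo (0:ℝ) 1, HasDerivAt φ (ψd₂ y - ψd₁ y) y := by
    intro y hy
    have hmem : Set.Ico (0:ℝ) 1 ∈ 𝓝 y :=
      mem_nhds_iff.2 ⟨Set.Ioo 0 1, Set.Ioo_subset_Ico_self, isOpen_Ioo, hy⟩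
    exact ((hder₂ y (Set.Ioo_subset_Ico_self hy)).hasDerivAt hmem).sub
      ((hder₁ y (Set.Ioo_subset_Ico_self hy)).hasDerivAt hmem)
  -- Step A : φ ≥ 0
  have stepA : ∀ y ∈ Set.Ico (0:ℝ) 1, 0 ≤ φ y := by
    intro b hb
    by_contra hneg
    push_neg at hneg
    have hb0 : 0 < b := by
      rcases eq_or_lt_of_le hb.1 with h' | h'
      · exfalso; rw [← h', hφ0] at hneg; exact absurd hneg (lt_irrefl _)
      · exact h'
    set S : Set ℝ := Set.Icc 0 b ∩ φ ⁻¹' Set.Ici 0 with hSdef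
    have hIccsub : Set.Icc (0:ℝ) b ⊆ Set.Ico 0 1 := fun x hx => ⟨hx.1, lt_of_le_of_lt hx.2 hb.2⟩
    have hSclosed : IsClosed S :=
      (hφc.mono hIccsub).preimage_isClosed_of_isClosed isClosed_Icc isClosed_Ici
    have hScompact : IsCompact S :=
      isCompact_Icc.of_isClosed_subset hSclosed Set.inter_subset_left
    have hSne : S.Nonempty := ⟨0, ⟨le_refl _, hb0.le⟩, by simp [hφ0]⟩
    set c : ℝ := sSup S with hcdef
    have hcS : c ∈ S := hScompact.sSup_mem hSne
    have hc0 : 0 ≤ c := hcS.1.1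
    have hcb : c ≤ b := hcS.1.2
    have hφc0 : 0 ≤ φ c := hcS.2
    have hcb' : c < b := by
      rcases eq_or_lt_of_le hcb with h' | h'
      · exfalso; rw [h'] at hφc0; linarith
      · exact h'
    have hnegIoc : ∀ y ∈ Set.Ioc c b, φ y < 0 := by
      intro y hy
      by_contra h'
      push_neg at h'
      have hyS : y ∈ S := ⟨⟨hc0.trans hy.1.le, hy.2⟩, h'⟩
      exact absurd (le_csSup hScompact.bddAbove hyS) (not_le.2 hy.1)
    have hsub : Set.Icc c b ⊆ Set.Ico 0 1 := fun x hx =>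
      ⟨hc0.trans hx.1, lt_of_le_of_lt hx.2 hb.2⟩
    have hmono : StrictMonoOn φ (Set.Icc c b) := by
      apply strictMonoOn_of_deriv_pos (convex_Icc c b) (hφc.mono hsub)
      intro x hx
      rw [interior_Icc] at hx
      have hxI : x ∈ Set.Ioo (0:ℝ) 1 := ⟨lt_of_le_of_lt hc0 hx.1, lt_trans hx.2 hb.2⟩
      have hxIco := Set.Ioo_subset_Ico_self hxI
      have hd := hderφ x hxI
      rw [hd.deriv]
      have hφx : φ x < 0 := hnegIoc x ⟨hx.1, hx.2.le⟩
      have hle : ψ₂ x ≤ ψ₁ x := by simp only [hφdef] at hφx; linarith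
      have hrle : ψ₂ x ^ α ≤ ψ₁ x ^ α :=
        Real.rpow_le_rpow (hpos₂ x hxIco) hle hα0.le
      rw [key₁ x hxIco, key₂ x hxIco]
      have h1x : 0 < 1 - x := by linarith [hxI.2]
      nlinarith [mul_pos (mul_pos hC0 hΔ0) h1x, mul_le_mul_of_nonneg_left hrle hC0.le]
    have := hmono (Set.left_mem_Icc.2 hcb) (Set.right_mem_Icc.2 hcb) hcb'
    linarith
  -- Step B : φ ≤ C * Δ ≤ C * (a₂ - a₁)^(2-p)
  have stepB : ∀ y ∈ Set.Ico (0:ℝ) 1, φ y ≤ C * (a₂ - a₁) ^ (2-p) := by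
    intro b hb
    have ht2 : (0:ℝ) ≤ (a₂ - a₁) ^ (2-p) := Real.rpow_nonneg hdle _
    rcases eq_or_lt_of_le hb.1 with h' | hb0
    · rw [← h', hφ0]; positivity
    · set g : ℝ → ℝ := fun y => C * Δ * y - φ y with hgdef
      have hIccsub : Set.Icc (0:ℝ) b ⊆ Set.Ico 0 1 := fun x hx =>
        ⟨hx.1, lt_of_le_of_lt hx.2 hb.2⟩
      have hgc : ContinuousOn g (Set.Icc 0 b) :=
        ((continuous_const.mul continuous_id).continuousOn).sub (hφc.mono hIccsub)
      have hderg : ∀ x ∈ Set.Ioo (0:ℝ) b, HasDerivAt g (C * Δ - (ψd₂ x - ψd₁ x)) x := by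
        intro x hx
        have hxI : x ∈ Set.Ioo (0:ℝ) 1 := ⟨hx.1, lt_trans hx.2 hb.2⟩
        have := ((hasDerivAt_id x).const_mul (C * Δ)).sub (hderφ x hxI)
        simp only [id_eq, mul_one] at this
        exact this
      have hmono : MonotoneOn g (Set.Icc 0 b) := by
        apply monotoneOn_of_deriv_nonneg (convex_Icc 0 b) hgc
        · intro x hx
          rw [interior_Icc] at hx
          exact (hderg x hx).differentiableAt.differentiableWithinAt
        · intro x hx
          rw [interior_Icc] at hx
          have hxI : x ∈ Set.Ioo (0:ℝ) 1 := ⟨hx.1, lt_trans hx.2 hb.2⟩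
          have hxIco := Set.Ioo_subset_Ico_self hxI
          rw [(hderg x hx).deriv]
          have hle : ψ₁ x ≤ ψ₂ x := by have := stepA x hxIco; simp only [hφdef] at this; linarith
          have hrle : ψ₁ x ^ α ≤ ψ₂ x ^ α :=
            Real.rpow_le_rpow (hpos₁ x hxIco) hle hα0.le
          have hform : ψd₂ x - ψd₁ x = C * Δ * (1-x) - C * (ψ₂ x ^ α - ψ₁ x ^ α) := by
            rw [key₁ x hxIco, key₂ x hxIco, hΔdef]; ring
          rw [hform]
          nlinarith [mul_nonneg (mul_pos hC0 hΔ0).le hx.1.le,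
            mul_le_mul_of_nonneg_left hrle hC0.le]
      have := hmono (Set.left_mem_Icc.2 hb0.le) (Set.right_mem_Icc.2 hb0.le) hb0.le
      have hg0 : g 0 = 0 := by simp [hgdef, hφ0]
      rw [hg0] at this
      have hφb : φ b ≤ C * Δ * b := by simp only [hgdef] at this; linarith
      have hb1 : b ≤ 1 := hb.2.le
      have : C * Δ * b ≤ C * Δ * 1 := by
        apply mul_le_mul_of_nonneg_left hb1 (mul_pos hC0 hΔ0).le
      calc φ b ≤ C * Δ * 1 := hφb.trans this
        _ = C * Δ := by ring
        _ ≤ C * (a₂ - a₁) ^ (2-p) := mul_le_mul_of_nonneg_left hΔle hC0.le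
  -- Conclusion
  intro y hy
  have hle : ψ₁ y ≤ ψ₂ y := by have := stepA y hy; simp only [hφdef] at this; linarith
  have ht2 : (0:ℝ) ≤ (a₂ - a₁) ^ (2-p) := Real.rpow_nonneg hdle _
  have ht1 : (0:ℝ) ≤ (a₂ - a₁) ^ ((2-p)*(p-1)/p) := Real.rpow_nonneg hdle _
  have hCK : C ≤ C * (1 + C ^ α) := by nlinarith
  refine ⟨hle, ?_, ?_⟩
  · have := stepB y hy
    simp only [hφdef] at this
    nlinarith
  · -- derivative bound
    set A : ℝ := C * Δ * (1 - y) with hAdef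
    set B : ℝ := C * (ψ₂ y ^ α - ψ₁ y ^ α) with hBdef
    have h1y0 : 0 ≤ 1 - y := by linarith [hy.2]
    have h1y1 : 1 - y ≤ 1 := by linarith [hy.1]
    have hA0 : 0 ≤ A := by positivity
    have hB0 : 0 ≤ B := by
      apply mul_nonneg hC0.le
      have := Real.rpow_le_rpow (hpos₁ y hy) hle hα0.le
      linarith
    have hAle : A ≤ C * (a₂ - a₁) ^ (2-p) := by
      calc A ≤ C * Δ * 1 := mul_le_mul_of_nonneg_left h1y1 (mul_pos hC0 hΔ0).le
        _ = C * Δ := by ring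
        _ ≤ C * (a₂ - a₁) ^ (2-p) := mul_le_mul_of_nonneg_left hΔle hC0.le
    have hBle : B ≤ C * C ^ α * (a₂ - a₁) ^ ((2-p)*(p-1)/p) := by
      have h1 : ψ₂ y ^ α - ψ₁ y ^ α ≤ (φ y) ^ α :=
        sub_rpow_le hα0.le hα1 (hpos₁ y hy) hle
      have h2 : (φ y) ^ α ≤ (C * (a₂ - a₁) ^ (2-p)) ^ α :=
        Real.rpow_le_rpow (stepA y hy) (stepB y hy) hα0.le
      have h3 : (C * (a₂ - a₁) ^ (2-p)) ^ α
          = C ^ α * (a₂ - a₁) ^ ((2-p)*(p-1)/p) := by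
        rw [Real.mul_rpow hC0.le ht2, ← Real.rpow_mul hdle]
        congr 1
        rw [hαdef]; ring_nf
      calc B ≤ C * (φ y) ^ α := by
              rw [hBdef]; exact mul_le_mul_of_nonneg_left h1 hC0.le
        _ ≤ C * (C ^ α * (a₂ - a₁) ^ ((2-p)*(p-1)/p)) := by
              rw [← h3]; exact mul_le_mul_of_nonneg_left h2 hC0.le
        _ = C * C ^ α * (a₂ - a₁) ^ ((2-p)*(p-1)/p) := by ring
    have hdiff : ψd₁ y - ψd₂ y = B - A := by
      rw [key₁ y hy, key₂ y hy, hAdef, hBdef, hΔdef]; ring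
    rw [hdiff]
    have habs : |B - A| ≤ A + B := by
      rw [abs_sub_comm, abs_le]; constructor <;> linarith
    have hCCα : C * C ^ α ≤ C * (1 + C ^ α) := by nlinarith
    calc |B - A| ≤ A + B := habs
      _ ≤ C * (a₂ - a₁) ^ (2-p) + C * C ^ α * (a₂ - a₁) ^ ((2-p)*(p-1)/p) :=
          add_le_add hAle hBle
      _ ≤ C * (1 + C ^ α) * (a₂ - a₁) ^ (2-p)
          + C * (1 + C ^ α) * (a₂ - a₁) ^ ((2-p)*(p-1)/p) :=
          add_le_add (mul_le_mul_of_nonneg_right hCK ht2)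
            (mul_le_mul_of_nonneg_right hCCα ht1)
      _ = C * (1 + C ^ α) * ((a₂ - a₁) ^ ((2-p)*(p-1)/p) + (a₂ - a₁) ^ (2-p)) := by ring
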